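/- Let q be a real number with 0 < q < 1, and let (B_{k,q})_{k≥0} be the (unique) sequence of real numbers with B_{0,q} = (q−1)/log q and, for every k ≥ 1, ∑_{l=0}^k C(k,l) q^l B_{l,q} − B_{k,q} = 1 if k = 1 and = 0 if k > 1. Define the modified q-Bernoulli polynomials B_{k,q}(x) = ∑_{i=0}^k C(k,i) q^{ix} B_{i,q} [x]_q^{k−i}. Then for every positive integer n and every integer k ≥ 0: B_{k,q}(n) − B_{k,q} = k·∑_{l=0}^{n−1} q^l [l]_q^{k−1} (with the conventions [0]_q^0 = 1 and that the sum is 0 when k = 0). -/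

import Mathlib

open Finset

/-- Workhorse triangular double-sum identity:
`∑_s C(k,s) (∑_{l≤s} C(s,l) a_l) x^s = ∑_l C(k,l) a_l x^l (x+1)^{k-l}`. -/
private lemma tri_sum (k : ℕ) (a : ℕ → ℝ) (x : ℝ) :
    ∑ s ∈ range (k + 1), (k.choose s : ℝ) * (∑ l ∈ range (s + 1), (s.choose l : ℝ) * a l) * x ^ s
      = ∑ l ∈ range (k + 1), (k.choose l : ℝ) * a l * x ^ l * (x + 1) ^ (k - l) := by
  have step1 : ∀ s ∈ range (k + 1),
      (k.choose s : ℝ) * (∑ l ∈ range (s + 1), (s.choose l : ℝ) * a l) * x ^ s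
        = ∑ l ∈ range (k + 1), (k.choose s : ℝ) * (s.choose l : ℝ) * a l * x ^ s := by
    intro s hs
    have hsub : range (s + 1) ⊆ range (k + 1) := by
      apply range_subset_range.2
      simp only [mem_range] at hs
      omega
    calc (k.choose s : ℝ) * (∑ l ∈ range (s + 1), (s.choose l : ℝ) * a l) * x ^ s
        = ∑ l ∈ range (s + 1), (k.choose s : ℝ) * (s.choose l : ℝ) * a l * x ^ s := by
          rw [mul_sum, sum_mul]
          apply sum_congr rfl
          intro l _
          ring
      _ = ∑ l ∈ range (k + 1), (k.choose s : ℝ) * (s.choose l : ℝ) * a l * x ^ s := by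
          apply sum_subset hsub
          intro l _ hl
          have : s < l := by
            simp only [mem_range, not_lt] at hl ⊢
            omega
          rw [Nat.choose_eq_zero_of_lt this]
          simp
  rw [sum_congr rfl step1, sum_comm]
  apply sum_congr rfl
  intro l hl
  have hlk : l ≤ k := by simpa [Nat.lt_succ_iff] using hl
  -- restrict the inner sum to s ≥ l
  have hIco : ∑ s ∈ Ico l (k + 1), (k.choose s : ℝ) * (s.choose l : ℝ) * a l * x ^ s
      = ∑ s ∈ range (k + 1), (k.choose s : ℝ) * (s.choose l : ℝ) * a l * x ^ s := by
    apply sum_subset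
    · intro s hs
      simp only [mem_Ico, mem_range] at hs ⊢
      omega
    · intro s _ hs
      have : s < l := by
        simp only [mem_Ico, mem_range] at *
        omega
      rw [Nat.choose_eq_zero_of_lt this]
      simp
  rw [← hIco, sum_Ico_eq_sum_range]
  have hrange : k + 1 - l = k - l + 1 := by omega
  rw [hrange]
  have hterm : ∀ t ∈ range (k - l + 1),
      (k.choose (l + t) : ℝ) * ((l + t).choose l : ℝ) * a l * x ^ (l + t)
        = ((k.choose l : ℝ) * a l * x ^ l) * (x ^ t * 1 ^ (k - l - t) * ((k - l).choose t : ℝ)) := by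
    intro t ht
    have ht' : t ≤ k - l := by simpa [Nat.lt_succ_iff] using ht
    have hlt : l + t ≤ k := by omega
    have hchoose : (k.choose (l + t)) * ((l + t).choose l) = k.choose l * ((k - l).choose t) := by
      have := Nat.choose_mul (n := k) (k := l + t) (s := l) (Nat.le_add_right l t)
      simpa [Nat.add_sub_cancel_left] using this
    have : ((k.choose (l + t)) * ((l + t).choose l) : ℝ) = (k.choose l : ℝ) * ((k - l).choose t : ℝ) := by
      exact_mod_cast congrArg (Nat.cast : ℕ → ℝ) hchoose
    rw [pow_add]
    linear_combination (a l * (x ^ l * x ^ t)) * this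
  rw [sum_congr rfl hterm, ← mul_sum, ← add_pow x 1 (k - l)]

section

variable (q : ℝ) (B : ℕ → ℝ)

/-- The recurrence in summed form, valid for all `s ≥ 0`. -/
private def Rec0 : Prop :=
  ∀ s : ℕ, (∑ l ∈ range (s + 1), (s.choose l : ℝ) * q ^ l * B l)
      = B s + if s = 1 then 1 else 0

/-- `D_e = ∑ C(e,i) (q-1)^i B_i`. -/
private noncomputable def Dq (e : ℕ) : ℝ :=
  ∑ i ∈ range (e + 1), (e.choose i : ℝ) * (q - 1) ^ i * B i

/-- Key consequence of the recurrence: `(q^e - 1) D_e = e (q-1)`. -/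
private lemma Dq_eq (hR : Rec0 q B) (e : ℕ) :
    (q ^ e - 1) * Dq q B e = e * (q - 1) := by
  have hS : ∑ s ∈ range (e + 1), (e.choose s : ℝ)
        * (∑ l ∈ range (s + 1), (s.choose l : ℝ) * (q ^ l * B l)) * (q - 1) ^ s
      = ∑ l ∈ range (e + 1), (e.choose l : ℝ) * (q ^ l * B l) * (q - 1) ^ l
          * ((q - 1) + 1) ^ (e - l) := tri_sum e (fun l => q ^ l * B l) (q - 1)
  have hq1 : (q - 1) + 1 = q := by ring
  rw [hq1] at hS
  -- left side of hS equals Dq + e (q-1) via the recurrence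
  have hL : ∑ s ∈ range (e + 1), (e.choose s : ℝ)
        * (∑ l ∈ range (s + 1), (s.choose l : ℝ) * (q ^ l * B l)) * (q - 1) ^ s
      = Dq q B e + e * (q - 1) := by
    have hterm : ∀ s ∈ range (e + 1), (e.choose s : ℝ)
          * (∑ l ∈ range (s + 1), (s.choose l : ℝ) * (q ^ l * B l)) * (q - 1) ^ s
        = (e.choose s : ℝ) * (q - 1) ^ s * B s
          + (if s = 1 then (e.choose s : ℝ) * (q - 1) ^ s else 0) := by
      intro s _
      have h1 : ∑ l ∈ range (s + 1), (s.choose l : ℝ) * (q ^ l * B l)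
          = B s + if s = 1 then 1 else 0 := by
        rw [← hR s]
        apply sum_congr rfl
        intro l _
        ring
      rw [h1]
      by_cases hs : s = 1 <;> simp [hs] <;> ring
    rw [sum_congr rfl hterm, sum_add_distrib]
    have h2 : ∑ s ∈ range (e + 1), (if s = 1 then (e.choose s : ℝ) * (q - 1) ^ s else 0)
        = e * (q - 1) := by
      rw [Finset.sum_ite_eq' (range (e + 1)) 1 (fun s => (e.choose s : ℝ) * (q - 1) ^ s)]
      by_cases he : 1 ∈ range (e + 1)
      · simp only [he, if_true, Nat.choose_one_right, pow_one]
      · have : e = 0 := by simp only [mem_range] at he; omega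
        simp [this]
    rw [h2, Dq]
  -- right side of hS equals q^e * Dq
  have hRt : ∑ l ∈ range (e + 1), (e.choose l : ℝ) * (q ^ l * B l) * (q - 1) ^ l * q ^ (e - l)
      = q ^ e * Dq q B e := by
    rw [Dq, mul_sum]
    apply sum_congr rfl
    intro l hl
    have hle : l ≤ e := by simpa [Nat.lt_succ_iff] using hl
    have : q ^ e = q ^ l * q ^ (e - l) := by
      rw [← pow_add]
      congr 1
      omega
    rw [this]
    ring
  rw [hL, hRt] at hS
  linear_combination -hS

/-- `H` expressed through the `D`-coefficients. -/
private lemma H_eq (k : ℕ) (Z : ℝ) :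
    ∑ i ∈ range (k + 1), (k.choose i : ℝ) * (q - 1) ^ i * B i * Z ^ i * (Z - 1) ^ (k - i)
      = (-1 : ℝ) ^ k * ∑ e ∈ range (k + 1), (k.choose e : ℝ) * Dq q B e * (-Z) ^ e := by
  have h := tri_sum k (fun i => (q - 1) ^ i * B i) (-Z)
  have hDq : ∀ e, Dq q B e = ∑ i ∈ range (e + 1), (e.choose i : ℝ) * ((q - 1) ^ i * B i) := by
    intro e
    rw [Dq]
    apply sum_congr rfl
    intro i _
    ring
  calc ∑ i ∈ range (k + 1), (k.choose i : ℝ) * (q - 1) ^ i * B i * Z ^ i * (Z - 1) ^ (k - i)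
      = (-1 : ℝ) ^ k * ∑ i ∈ range (k + 1),
          (k.choose i : ℝ) * ((q - 1) ^ i * B i) * (-Z) ^ i * ((-Z) + 1) ^ (k - i) := by
        rw [mul_sum]
        apply sum_congr rfl
        intro i hi
        have hik : i ≤ k := by simpa [Nat.lt_succ_iff] using hi
        have hsplit : (-1 : ℝ) ^ k = (-1 : ℝ) ^ i * (-1 : ℝ) ^ (k - i) := by
          rw [← pow_add]
          congr 1
          omega
        have h1 : (-1 : ℝ) ^ i * (-Z) ^ i = Z ^ i := by
          rw [← mul_pow]
          congr 1
          ring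
        have h2 : (-1 : ℝ) ^ (k - i) * ((-Z) + 1) ^ (k - i) = (Z - 1) ^ (k - i) := by
          rw [← mul_pow]
          congr 1
          ring
        rw [hsplit]
        linear_combination
          (-((k.choose i : ℝ) * ((q - 1) ^ i * B i)
              * ((-1 : ℝ) ^ (k - i) * ((-Z) + 1) ^ (k - i)))) * h1
            + (-((k.choose i : ℝ) * ((q - 1) ^ i * B i) * Z ^ i)) * h2
    _ = (-1 : ℝ) ^ k * ∑ e ∈ range (k + 1), (k.choose e : ℝ) * Dq q B e * (-Z) ^ e := by
        rw [← h]
        congr 1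
        apply sum_congr rfl
        intro e _
        rw [hDq e]

/-- The key step identity: `H(qZ) - H(Z) = k (q-1) Z (Z-1)^{k-1}` for `k ≥ 1`. -/
private lemma H_step (hR : Rec0 q B) (k : ℕ) (hk : 1 ≤ k) (Z : ℝ) :
    (∑ i ∈ range (k + 1), (k.choose i : ℝ) * (q - 1) ^ i * B i * (q * Z) ^ i
        * (q * Z - 1) ^ (k - i))
      - (∑ i ∈ range (k + 1), (k.choose i : ℝ) * (q - 1) ^ i * B i * Z ^ i * (Z - 1) ^ (k - i))
      = k * (q - 1) * Z * (Z - 1) ^ (k - 1) := by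
  rw [H_eq q B k (q * Z), H_eq q B k Z, ← mul_sub, ← sum_sub_distrib]
  have hterm : ∀ e ∈ range (k + 1),
      (k.choose e : ℝ) * Dq q B e * (-(q * Z)) ^ e - (k.choose e : ℝ) * Dq q B e * (-Z) ^ e
        = (k.choose e : ℝ) * (e * (q - 1)) * (-1 : ℝ) ^ e * Z ^ e := by
    intro e _
    have h1 : (-(q * Z)) ^ e = (-1 : ℝ) ^ e * q ^ e * Z ^ e := by
      rw [show -(q * Z) = (-1) * q * Z by ring, mul_pow, mul_pow]
    have h2 : (-Z) ^ e = (-1 : ℝ) ^ e * Z ^ e := by rw [neg_pow]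
    rw [h1, h2]
    have hDe := Dq_eq q B hR e
    linear_combination ((k.choose e : ℝ) * (-1 : ℝ) ^ e * Z ^ e) * hDe
  rw [sum_congr rfl hterm]
  -- peel off the e = 0 term and reindex
  rw [Finset.sum_range_succ']
  simp only [Nat.cast_zero, zero_mul, mul_zero, pow_zero, add_zero]
  -- expand (Z-1)^(k-1)
  have hexp : (Z - 1) ^ (k - 1) = ∑ t ∈ range k, Z ^ t * (-1 : ℝ) ^ (k - 1 - t)
      * ((k - 1).choose t : ℝ) := by
    have h := add_pow Z (-1 : ℝ) (k - 1)
    have hk1 : k - 1 + 1 = k := by omega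
    rw [hk1] at h
    rw [show Z - 1 = Z + (-1) by ring, h]
  rw [hexp, mul_sum, mul_sum]
  apply sum_congr rfl
  intro t ht
  have ht' : t < k := by simpa using ht
  have hchoose : (k : ℕ) * ((k - 1).choose t) = k.choose (t + 1) * (t + 1) := by
    have := Nat.add_one_mul_choose_eq (k - 1) t
    have hk1 : k - 1 + 1 = k := by omega
    rwa [hk1] at this
  have hchoose' : ((k : ℝ)) * ((k - 1).choose t : ℝ) = (k.choose (t + 1) : ℝ) * (t + 1) := by
    exact_mod_cast congrArg (Nat.cast : ℕ → ℝ) hchoose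
  have hsign : (-1 : ℝ) ^ k * (-1 : ℝ) ^ (t + 1) = (-1 : ℝ) ^ (k - 1 - t) := by
    have h3 : k + (t + 1) = (k - 1 - t) + 2 * (t + 1) := by omega
    rw [← pow_add, h3, pow_add, pow_mul, neg_one_sq, one_pow, mul_one]
  push_cast
  linear_combination (-(q - 1) * Z ^ (t + 1) * ((-1 : ℝ) ^ k * (-1 : ℝ) ^ (t + 1))) * hchoose'
    + ((q - 1) * Z ^ (t + 1) * (k : ℝ) * (((k - 1).choose t : ℝ))) * hsign

end

/-- If `(B_{k,q})` are the modified `q`-Bernoulli numbers, determined by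
`B_{0,q} = (q-1)/log q` and `(qB+1)^k - B_{k,q} = δ_{k,1}` for `k ≥ 1`, and
`B_{k,q}(x) = ∑_{i=0}^k C(k,i) q^{ix} B_{i,q} [x]_q^{k-i}` are the modified `q`-Bernoulli
polynomials, then `B_{k,q}(n) - B_{k,q} = k ∑_{l=0}^{n-1} q^l [l]_q^{k-1}`. -/
theorem modified_qBernoulli_sum (q : ℝ) (hq0 : 0 < q) (hq1 : q < 1)
    (B : ℕ → ℝ) (h0 : B 0 = (q - 1) / Real.log q)
    (hrec : ∀ k : ℕ, 1 ≤ k →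
      (∑ l ∈ Finset.range (k + 1), (k.choose l : ℝ) * q ^ l * B l) - B k =
        if k = 1 then 1 else 0)
    (n : ℕ) (hn : 0 < n) (k : ℕ) :
    (∑ i ∈ Finset.range (k + 1),
        (k.choose i : ℝ) * q ^ (i * n) * B i * ((1 - q ^ n) / (1 - q)) ^ (k - i)) - B k =
      (k : ℝ) * ∑ l ∈ Finset.range n, q ^ l * ((1 - q ^ l) / (1 - q)) ^ (k - 1) := by
  have hq : q - 1 ≠ 0 := by linarith
  have hR : Rec0 q B := by
    intro s
    rcases Nat.eq_zero_or_pos s with hs | hs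
    · subst hs
      simp
    · have := hrec s hs
      linarith [this]
  -- dispatch k = 0
  rcases Nat.eq_zero_or_pos k with hk0 | hk
  · subst hk0
    simp
  -- main case: induction on n (statement holds for all n including 0)
  clear hn h0 hrec
  induction n with
  | zero =>
    simp only [Finset.range_zero, Finset.sum_empty, mul_zero, pow_zero, sub_self, zero_div]
    have h00 : ∀ i ∈ Finset.range (k + 1),
        (k.choose i : ℝ) * 1 * B i * (0 : ℝ) ^ (k - i)
          = if i = k then B k else 0 := by
      intro i hi
      have hik : i ≤ k := by simpa [Nat.lt_succ_iff] using hi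
      by_cases h : i = k
      · subst h
        simp
      · rw [if_neg h, zero_pow (by omega : k - i ≠ 0)]
        ring
    rw [Finset.sum_congr rfl h00, Finset.sum_ite_eq' (Finset.range (k + 1)) k]
    simp
  | succ m ih =>
    -- P (m+1) = P m + k * q^m * y_m^(k-1)
    set y : ℕ → ℝ := fun m => (1 - q ^ m) / (1 - q) with hy
    have h1q : (1 : ℝ) - q ≠ 0 := by linarith
    have hyz : ∀ m : ℕ, (q - 1) * y m = q ^ m - 1 := by
      intro m
      rw [hy]
      field_simp
      ring
    -- (q-1)^k * P m = H (q^m)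
    have hPH : ∀ m : ℕ, (q - 1) ^ k *
        (∑ i ∈ Finset.range (k + 1),
          (k.choose i : ℝ) * q ^ (i * m) * B i * (y m) ^ (k - i))
        = ∑ i ∈ Finset.range (k + 1),
            (k.choose i : ℝ) * (q - 1) ^ i * B i * (q ^ m) ^ i * (q ^ m - 1) ^ (k - i) := by
      intro m
      rw [Finset.mul_sum]
      apply Finset.sum_congr rfl
      intro i hi
      have hik : i ≤ k := by simpa [Nat.lt_succ_iff] using hi
      have hsplit : (q - 1) ^ k = (q - 1) ^ i * (q - 1) ^ (k - i) := by
        rw [← pow_add]; congr 1; omega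
      have h1 : (q - 1) ^ (k - i) * (y m) ^ (k - i) = (q ^ m - 1) ^ (k - i) := by
        rw [← mul_pow, hyz]
      have h2 : q ^ (i * m) = (q ^ m) ^ i := by
        rw [← pow_mul, Nat.mul_comm]
      rw [hsplit, h2, ← h1]
      ring
    -- step identity
    have hstep := H_step q B hR k hk (q ^ m)
    have hqm1 : q * q ^ m = q ^ (m + 1) := by rw [pow_succ]; ring
    rw [hqm1] at hstep
    rw [← hPH (m + 1), ← hPH m] at hstep
    have hstep2 : (q - 1) ^ k *
        ((∑ i ∈ Finset.range (k + 1),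
            (k.choose i : ℝ) * q ^ (i * (m + 1)) * B i * (y (m + 1)) ^ (k - i))
          - (∑ i ∈ Finset.range (k + 1),
            (k.choose i : ℝ) * q ^ (i * m) * B i * (y m) ^ (k - i)))
        = (q - 1) ^ k * ((k : ℝ) * q ^ m * (y m) ^ (k - 1)) := by
      rw [mul_sub, hstep]
      have hk1 : (q - 1) ^ k = (q - 1) * (q - 1) ^ (k - 1) := by
        rw [← pow_succ']
        congr 1
        omega
      have h1 : (q - 1) ^ (k - 1) * (y m) ^ (k - 1) = (q ^ m - 1) ^ (k - 1) := by
        rw [← mul_pow, hyz]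
      rw [hk1, ← h1]
      ring
    have hcancel := mul_left_cancel₀ (pow_ne_zero k hq) hstep2
    rw [Finset.sum_range_succ (fun l => q ^ l * ((1 - q ^ l) / (1 - q)) ^ (k - 1)) m]
    have : (∑ i ∈ Finset.range (k + 1),
        (k.choose i : ℝ) * q ^ (i * (m + 1)) * B i * (y (m + 1)) ^ (k - i))
        = (∑ i ∈ Finset.range (k + 1),
          (k.choose i : ℝ) * q ^ (i * m) * B i * (y m) ^ (k - i))
          + (k : ℝ) * q ^ m * (y m) ^ (k - 1) := by
      linarith [hcancel]
    rw [hy] at this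
    rw [this]
    rw [mul_add]
    have hih : (∑ i ∈ Finset.range (k + 1),
        (k.choose i : ℝ) * q ^ (i * m) * B i * ((1 - q ^ m) / (1 - q)) ^ (k - i)) - B k =
        (k : ℝ) * ∑ l ∈ Finset.range m, q ^ l * ((1 - q ^ l) / (1 - q)) ^ (k - 1) := ih
    linarith [hih]
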